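/- arXiv:2008.13727 — 3 statements merged into one kernel-verified Lean document; each statement's English description precedes it below -/
import Mathlib

section
/- The normed space (SV_d(X), ‖·‖_{SV_d}) is separable: it contains a countable dense subset (namely the local functions taking only rational values). -/
open MeasureTheory Filter Topology

/-- The full shift configuration space `𝒜^{ℤ^d}`. -/
abbrev Config (d : ℕ) (A : Type*) := (Fin d → ℤ) → A

/-- The shift action of `ℤ^d`: `(T^k x)_i = x_{i+k}`. -/
def shift {d : ℕ} {A : Type*} (k : Fin d → ℤ) (x : Config d A) : Config d A :=
  fun i => x (i + k)

/-- The ℓ∞ norm of a lattice point, `‖k‖_∞ = max_i |k_i|`. -/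
def normInf {d : ℕ} (k : Fin d → ℤ) : ℕ :=
  Finset.univ.sup fun i => (k i).natAbs

/-- The box `Λ_N = {k : ‖k‖_∞ ≤ N}` as a finset. -/
noncomputable def boxF (d N : ℕ) : Finset (Fin d → ℤ) :=
  Finset.Icc (fun _ => -(N : ℤ)) (fun _ => (N : ℤ))

/-- The `n`-th variation of `f` on a subshift `X`:
`δ_n(f) = sup {|f x - f y| : x, y ∈ X, x_{Λ_n} = y_{Λ_n}}`. -/
noncomputable def deltaVar {d : ℕ} {A : Type*} (X : Set (Config d A))
    (f : Config d A → ℝ) (n : ℕ) : ℝ :=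
  sSup {r : ℝ | ∃ x ∈ X, ∃ y ∈ X,
    (∀ k : Fin d → ℤ, normInf k ≤ n → x k = y k) ∧ r = |f x - f y|}

/-- `f` is bounded on `X`. -/
def BoundedOn {d : ℕ} {A : Type*} (X : Set (Config d A)) (f : Config d A → ℝ) : Prop :=
  ∃ C : ℝ, ∀ x ∈ X, |f x| ≤ C

/-- Membership in `SV_d(X)`: bounded with `Σ_{n ≥ 1} n^{d-1} δ_n(f) < ∞`. -/
def MemSV (d : ℕ) {A : Type*} (X : Set (Config d A)) (f : Config d A → ℝ) : Prop :=
  BoundedOn X f ∧ Summable fun n : ℕ => ((n : ℝ) + 1) ^ (d - 1) * deltaVar X f (n + 1)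

/-- The sup norm of `f` over `X`. -/
noncomputable def supNormOn {d : ℕ} {A : Type*} (X : Set (Config d A))
    (f : Config d A → ℝ) : ℝ :=
  sSup {r : ℝ | ∃ x ∈ X, r = |f x|}

/-- The `SV_d` norm: `‖f‖_{SV_d} = ‖f‖_∞ + Σ_{n ≥ 1} n^{d-1} δ_n(f)`. -/
noncomputable def svNorm (d : ℕ) {A : Type*} (X : Set (Config d A))
    (f : Config d A → ℝ) : ℝ :=
  supNormOn X f + ∑' n : ℕ, ((n : ℝ) + 1) ^ (d - 1) * deltaVar X f (n + 1)

/-- The Gibbs relation `𝔗`: pairs of points of `X` that agree outside a finite set. -/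
def gibbsRel {d : ℕ} {A : Type*} (X : Set (Config d A)) :
    Set (Config d A × Config d A) :=
  {p | p.1 ∈ X ∧ p.2 ∈ X ∧ ∃ Λ : Finset (Fin d → ℤ), ∀ k ∉ Λ, p.1 k = p.2 k}

/-- The cocycle `φ_f(x,y) = Σ_{k ∈ ℤ^d} (f(T^k y) - f(T^k x))` (unordered sum). -/
noncomputable def phiF {d : ℕ} {A : Type*} (f : Config d A → ℝ)
    (x y : Config d A) : ℝ :=
  ∑' k : Fin d → ℤ, (f (shift k y) - f (shift k x))

/-- Membership in `𝓕(X)`: homeomorphisms of `X` changing only finitely many coordinates,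
uniformly. -/
def memF {d : ℕ} {A : Type*} [TopologicalSpace A] (X : Set (Config d A))
    (φ : ↥X ≃ₜ ↥X) : Prop :=
  ∃ n : ℕ, 1 ≤ n ∧ ∀ x : ↥X, ∀ k : Fin d → ℤ, n < normInf k → (φ x).1 k = x.1 k

/-- `𝓕_n(X)`. -/
def Fn {d : ℕ} {A : Type*} [TopologicalSpace A] (X : Set (Config d A)) (n : ℕ) :
    Set (↥X ≃ₜ ↥X) :=
  {φ | (∀ x : ↥X, ∀ k : Fin d → ℤ, n < normInf k → (φ x).1 k = x.1 k) ∧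
    ∀ x y : ↥X,
      ((∀ k : Fin d → ℤ, normInf k ≤ n → x.1 k = y.1 k) ↔
        (∀ k : Fin d → ℤ, normInf k ≤ n → (φ x).1 k = (φ y).1 k))}

/-- The configuration `ω x_{Λ^c}`: equal to `ω` on `Λ` and to `x` off `Λ`. -/
def patch {d : ℕ} {A : Type*} (Λ : Finset (Fin d → ℤ)) (ω : {k // k ∈ Λ} → A)
    (x : Config d A) : Config d A :=
  fun k => if h : k ∈ Λ then ω ⟨k, h⟩ else x k

/-- `f_n = Σ_{i ∈ Λ_n} f ∘ T^i`. -/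
noncomputable def fnSum (d : ℕ) {A : Type*} (f : Config d A → ℝ) (n : ℕ)
    (z : Config d A) : ℝ :=
  ∑ i ∈ boxF d n, f (shift i z)

/-- The σ-algebra `𝓕_Δ` on `X`, generated by the coordinate projections `x ↦ x_i`, `i ∈ Δ`. -/
def cylSigma {d : ℕ} {A : Type*} [MeasurableSpace A] (X : Set (Config d A))
    (Δ : Set (Fin d → ℤ)) : MeasurableSpace ↥X :=
  MeasurableSpace.comap (fun (x : ↥X) (i : ↥Δ) => x.1 i.1) MeasurableSpace.pi

/-- `μ` is a Gibbs measure for `f`: `(φ_f, 𝔗)`-conformal. -/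
def IsGibbs (d : ℕ) {A : Type*} [MeasurableSpace A] (X : Set (Config d A))
    (f : Config d A → ℝ) (μ : Measure ↥X) : Prop :=
  ∀ V W : ↥X → ↥X, Measurable V → Measurable W →
    (∀ x, W (V x) = x) → (∀ x, V (W x) = x) →
    (∀ x : ↥X, ((x.1, (V x).1) ∈ gibbsRel X)) →
    (Measure.map V μ ≪ μ ∧
      ∀ᵐ x ∂μ, (Measure.map V μ).rnDeriv μ x
        = ENNReal.ofReal (Real.exp (phiF f x.1 (W x).1)))

/-- `μ` is a topological Gibbs measure for `f`: `(φ_f|_{𝔗⁰}, 𝔗⁰)`-conformal. -/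
def IsTopGibbs (d : ℕ) {A : Type*} [TopologicalSpace A] [MeasurableSpace A]
    (X : Set (Config d A)) (f : Config d A → ℝ) (μ : Measure ↥X) : Prop :=
  ∀ φ : ↥X ≃ₜ ↥X, memF X φ →
    (Measure.map (⇑φ) μ ≪ μ ∧
      ∀ᵐ x ∂μ, (Measure.map (⇑φ) μ).rnDeriv μ x
        = ENNReal.ofReal (Real.exp (phiF f x.1 (φ.symm x).1)))

/-- Finite-volume Gibbsian ratios defining the kernel `γ_Λ`. -/
noncomputable def gammaFn (d : ℕ) {A : Type*} [Fintype A] (X : Set (Config d A))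
    (f : Config d A → ℝ) (Λ : Finset (Fin d → ℤ)) (S : Set ↥X) (x : Config d A)
    (n : ℕ) : ℝ :=
  (∑ ω : {k // k ∈ Λ} → A,
      (Subtype.val '' S).indicator (fun z => Real.exp (fnSum d f n z)) (patch Λ ω x)) /
  (∑ η : {k // k ∈ Λ} → A,
      X.indicator (fun z => Real.exp (fnSum d f n z)) (patch Λ η x))

/-- The kernel `γ_Λ(S | x)`, defined as the limit of the finite-volume ratios. -/
noncomputable def gamma (d : ℕ) {A : Type*} [Fintype A] (X : Set (Config d A))
    (f : Config d A → ℝ) (Λ : Finset (Fin d → ℤ)) (S : Set ↥X) (x : Config d A) : ℝ :=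
  limUnder atTop (gammaFn d X f Λ S x)

/-- `X` is a subshift of finite type. -/
def IsSFT {d : ℕ} {A : Type*} (X : Set (Config d A)) : Prop :=
  ∃ n : ℕ, 1 ≤ n ∧ ∃ F : Set ({k : Fin d → ℤ // normInf k ≤ n} → A),
    X = {x : Config d A |
      ∀ l : Fin d → ℤ, (fun k : {k : Fin d → ℤ // normInf k ≤ n} => shift l x k.1) ∉ F}

/-- The topological Gibbs relation `𝔗⁰`. -/
def topGibbsRel {d : ℕ} {A : Type*} [TopologicalSpace A] (X : Set (Config d A)) :
    Set (Config d A × Config d A) :=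
  {p | ∃ (hx : p.1 ∈ X) (φ : ↥X ≃ₜ ↥X), memF X φ ∧ (φ ⟨p.1, hx⟩).1 = p.2}

/-- `f` is a local function on `X`. -/
def IsLocal {d : ℕ} {A : Type*} (X : Set (Config d A)) (f : Config d A → ℝ) : Prop :=
  ∃ Λ : Finset (Fin d → ℤ), ∀ x ∈ X, ∀ y ∈ X, (∀ k ∈ Λ, x k = y k) → f x = f y

theorem SVaux_mem_boxF {d M : ℕ} (k : Fin d → ℤ) : k ∈ boxF d M ↔ normInf k ≤ M := by
  simp only [boxF, Finset.mem_Icc, normInf, Finset.sup_le_iff, Finset.mem_univ, forall_true_left,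
    Pi.le_def, true_implies]
  constructor
  · rintro ⟨h1, h2⟩ i
    have := h1 i; have := h2 i; omega
  · intro h
    refine ⟨fun i => ?_, fun i => ?_⟩ <;> (have := h i; omega)

theorem SVaux_deltaVar_nonneg {d : ℕ} {A : Type*} (X : Set (Config d A))
    (f : Config d A → ℝ) (n : ℕ) : 0 ≤ deltaVar X f n := by
  apply Real.sSup_nonneg
  rintro r ⟨x, hx, y, hy, h, rfl⟩
  exact abs_nonneg _

theorem SVaux_deltaVar_le {d : ℕ} {A : Type*} {X : Set (Config d A)}
    {f : Config d A → ℝ} {n : ℕ} {c : ℝ} (hc : 0 ≤ c)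
    (h : ∀ x ∈ X, ∀ y ∈ X, (∀ k : Fin d → ℤ, normInf k ≤ n → x k = y k) →
      |f x - f y| ≤ c) : deltaVar X f n ≤ c := by
  apply Real.sSup_le _ hc
  rintro r ⟨x, hx, y, hy, hxy, rfl⟩
  exact h x hx y hy hxy

theorem SVaux_abs_sub_le_deltaVar {d : ℕ} {A : Type*} {X : Set (Config d A)}
    {f : Config d A → ℝ} {n : ℕ} {C : ℝ} (hC : ∀ x ∈ X, |f x| ≤ C)
    {x y : Config d A} (hx : x ∈ X) (hy : y ∈ X)
    (hxy : ∀ k : Fin d → ℤ, normInf k ≤ n → x k = y k) :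
    |f x - f y| ≤ deltaVar X f n := by
  apply le_csSup
  · refine ⟨2 * C, ?_⟩
    rintro r ⟨a, ha, b, hb, -, rfl⟩
    calc |f a - f b| ≤ |f a| + |f b| := abs_sub _ _
      _ ≤ C + C := add_le_add (hC a ha) (hC b hb)
      _ = 2 * C := by ring
  · exact ⟨x, hx, y, hy, hxy, rfl⟩

theorem SVaux_memSV_pattern {d : ℕ} {A : Type*} [Fintype A] (X : Set (Config d A))
    (hne : X.Nonempty) (M : ℕ) (q : ({k : Fin d → ℤ // k ∈ boxF d M} → A) → ℚ) :
    MemSV d X (fun x => ((q fun k => x k.1 : ℚ) : ℝ)) := by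
  classical
  constructor
  · refine ⟨∑ p : {k : Fin d → ℤ // k ∈ boxF d M} → A, |((q p : ℚ) : ℝ)|, fun x hx => ?_⟩
    exact Finset.single_le_sum (f := fun p => |((q p : ℚ) : ℝ)|) (fun p _ => abs_nonneg _) (Finset.mem_univ _)
  · apply summable_of_ne_finset_zero (α := ℝ) (β := ℕ) (s := Finset.range M)
    intro n hn
    have hM : M ≤ n + 1 := by simp only [Finset.mem_range, not_lt] at hn; omega
    have hz : deltaVar X (fun x => ((q fun k => x k.1 : ℚ) : ℝ)) (n + 1) = 0 := by
      have hset : {r : ℝ | ∃ x ∈ X, ∃ y ∈ X,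
          (∀ k : Fin d → ℤ, normInf k ≤ n + 1 → x k = y k) ∧
          r = |((q fun k => x k.1 : ℚ) : ℝ) - ((q fun k => y k.1 : ℚ) : ℝ)|} = {0} := by
        ext r
        constructor
        · rintro ⟨x, hx, y, hy, hxy, rfl⟩
          have : (fun k : {k : Fin d → ℤ // k ∈ boxF d M} => x k.1)
              = fun k => y k.1 := by
            funext k
            exact hxy k.1 (le_trans ((SVaux_mem_boxF k.1).1 k.2) hM)
          simp [this]
        · rintro rfl
          exact ⟨hne.choose, hne.choose_spec, hne.choose, hne.choose_spec,
            fun _ _ => rfl, by simp⟩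
      rw [deltaVar, hset, csSup_singleton]
    rw [hz, mul_zero]
/-- `(SV_d(X), ‖·‖_{SV_d})` is separable: it contains a countable dense
subset. -/
theorem SV_separable {d : ℕ} (hd : 1 ≤ d) {A : Type*} [Fintype A] [Nonempty A]
    [TopologicalSpace A] [DiscreteTopology A]
    (X : Set (Config d A)) (hne : X.Nonempty) (hcl : IsClosed X)
    (hinv : ∀ k : Fin d → ℤ, ∀ x ∈ X, shift k x ∈ X) :
    ∃ D : Set (Config d A → ℝ), D.Countable ∧ (∀ g ∈ D, MemSV d X g) ∧
      ∀ f : Config d A → ℝ, MemSV d X f → ∀ ε : ℝ, 0 < ε →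
        ∃ g ∈ D, svNorm d X (fun x => f x - g x) < ε := by
  classical
  refine ⟨⋃ (M : ℕ), Set.range (fun q : ({k : Fin d → ℤ // k ∈ boxF d M} → A) → ℚ =>
      fun x : Config d A => ((q fun k => x k.1 : ℚ) : ℝ)), ?_, ?_, ?_⟩
  · exact Set.countable_iUnion fun M => Set.countable_range _
  · rintro g hg
    simp only [Set.mem_iUnion, Set.mem_range] at hg
    obtain ⟨M, q, rfl⟩ := hg
    exact SVaux_memSV_pattern X hne M q
  · intro f hf ε hε
    obtain ⟨⟨C, hC⟩, hsum⟩ := hf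
    set t : ℕ → ℝ := fun n => ((n : ℝ) + 1) ^ (d - 1) * deltaVar X f (n + 1) with ht
    have htnn : ∀ n, 0 ≤ t n := fun n =>
      mul_nonneg (by positivity) (SVaux_deltaVar_nonneg X f _)
    -- choose N controlling the tail
    obtain ⟨N, hN⟩ : ∃ N : ℕ, ∑' k, t (k + N) < ε / 8 := by
      have h0 : (0 : ℝ) < ε / 8 := by positivity
      have := (tendsto_sum_nat_add t).eventually (gt_mem_nhds h0)
      exact this.exists
    have htailnn : ∀ N' : ℕ, 0 ≤ ∑' k, t (k + N') := fun N' =>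
      tsum_nonneg fun k => htnn _
    set CN : ℝ := ∑ n ∈ Finset.range N, ((n : ℝ) + 1) ^ (d - 1) with hCNdef
    have hCN : 0 ≤ CN := Finset.sum_nonneg fun n _ => by positivity
    set σ : ℝ := ε / (8 * (1 + 2 * CN)) with hσdef
    have hσ : 0 < σ := by positivity
    -- deltaVar f (n+1) → 0, choose m ≥ N with δ_{m+1} ≤ σ
    obtain ⟨m, hmN, hmδ⟩ : ∃ m : ℕ, N ≤ m ∧ deltaVar X f (m + 1) ≤ σ := by
      have hδle : ∀ n : ℕ, deltaVar X f (n + 1) ≤ t n := by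
        intro n
        have h1 : (1 : ℝ) ≤ ((n : ℝ) + 1) ^ (d - 1) :=
          one_le_pow₀ (by linarith [Nat.cast_nonneg (α := ℝ) n])
        calc deltaVar X f (n + 1) = 1 * deltaVar X f (n + 1) := (one_mul _).symm
          _ ≤ t n := mul_le_mul_of_nonneg_right h1 (SVaux_deltaVar_nonneg X f _)
      have hδ0 : Tendsto (fun n => deltaVar X f (n + 1)) atTop (𝓝 0) :=
        squeeze_zero (fun n => SVaux_deltaVar_nonneg X f _) hδle hsum.tendsto_atTop_zero
      have h1 : ∀ᶠ n in atTop, deltaVar X f (n + 1) < σ :=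
        hδ0.eventually (gt_mem_nhds hσ)
      obtain ⟨m, hm1, hm2⟩ := (h1.and (eventually_ge_atTop N)).exists
      exact ⟨m, hm2, hm1.le⟩
    set M : ℕ := m + 1 with hMdef
    set CM : ℝ := ∑ n ∈ Finset.range M, ((n : ℝ) + 1) ^ (d - 1) with hCMdef
    have hCM : 0 ≤ CM := Finset.sum_nonneg fun n _ => by positivity
    set ε' : ℝ := ε / (8 * (1 + 2 * CN + 2 * CM)) with hε'def
    have hε' : 0 < ε' := by positivity
    -- selection of representatives and rational values
    have hsel : ∀ p : {k : Fin d → ℤ // k ∈ boxF d M} → A, ∃ qq : ℚ,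
        (∃ z ∈ X, ∀ k : {k : Fin d → ℤ // k ∈ boxF d M}, z k.1 = p k) →
        ∃ z ∈ X, (∀ k : {k : Fin d → ℤ // k ∈ boxF d M}, z k.1 = p k) ∧
          |f z - (qq : ℝ)| < ε' := by
      intro p
      by_cases h : ∃ z ∈ X, ∀ k : {k : Fin d → ℤ // k ∈ boxF d M}, z k.1 = p k
      · obtain ⟨z, hz, hzp⟩ := h
        obtain ⟨qq, hqq⟩ := exists_rat_near (f z) hε'
        exact ⟨qq, fun _ => ⟨z, hz, hzp, hqq⟩⟩
      · exact ⟨0, fun hh => absurd hh h⟩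
    choose q hq using hsel
    set g : Config d A → ℝ := fun x => ((q fun k => x k.1 : ℚ) : ℝ) with hgdef
    refine ⟨g, ?_, ?_⟩
    · exact Set.mem_iUnion.2 ⟨M, ⟨q, rfl⟩⟩
    -- key facts
    have hwit : ∀ x ∈ X, ∃ z ∈ X,
        (∀ k : Fin d → ℤ, k ∈ boxF d M → z k = x k) ∧ |f z - g x| < ε' := by
      intro x hx
      obtain ⟨z, hz, hzp, hzq⟩ := hq _ ⟨x, hx, fun k => rfl⟩
      exact ⟨z, hz, fun k hk => hzp ⟨k, hk⟩, hzq⟩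
    -- (1) sup bound
    have hsup : ∀ x ∈ X, |f x - g x| ≤ σ + ε' := by
      intro x hx
      obtain ⟨z, hz, hzx, hzq⟩ := hwit x hx
      have h1 : |f x - f z| ≤ deltaVar X f M := by
        apply SVaux_abs_sub_le_deltaVar hC hx hz
        intro k hk
        exact (hzx k ((SVaux_mem_boxF k).2 hk)).symm
      calc |f x - g x| = |(f x - f z) + (f z - g x)| := by ring_nf
        _ ≤ |f x - f z| + |f z - g x| := abs_add_le _ _
        _ ≤ deltaVar X f M + ε' := add_le_add h1 hzq.le
        _ ≤ σ + ε' := by rw [hMdef]; exact add_le_add hmδ le_rfl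
    -- (2)+(3) mid bound
    have hmid : ∀ n : ℕ, n + 1 ≤ M →
        deltaVar X (fun x => f x - g x) (n + 1) ≤ 2 * deltaVar X f (n + 1) + 2 * ε' := by
      intro n hn
      apply SVaux_deltaVar_le
        (by have := SVaux_deltaVar_nonneg X f (n+1); linarith)
      intro x hx y hy hxy
      obtain ⟨zx, hzx, hzxe, hzxq⟩ := hwit x hx
      obtain ⟨zy, hzy, hzye, hzyq⟩ := hwit y hy
      have hzagree : ∀ k : Fin d → ℤ, normInf k ≤ n + 1 → zx k = zy k := by
        intro k hk
        have hkM : k ∈ boxF d M := (SVaux_mem_boxF k).2 (le_trans hk hn)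
        rw [hzxe k hkM, hzye k hkM]
        exact hxy k hk
      have h1 : |f x - f y| ≤ deltaVar X f (n + 1) :=
        SVaux_abs_sub_le_deltaVar hC hx hy hxy
      have h2 : |f zx - f zy| ≤ deltaVar X f (n + 1) :=
        SVaux_abs_sub_le_deltaVar hC hzx hzy hzagree
      have h3 : |g x - g y| ≤ deltaVar X f (n + 1) + 2 * ε' := by
        calc |g x - g y| = |(g x - f zx) + (f zx - f zy) + (f zy - g y)| := by ring_nf
          _ ≤ |(g x - f zx) + (f zx - f zy)| + |f zy - g y| := abs_add_le _ _
          _ ≤ |g x - f zx| + |f zx - f zy| + |f zy - g y| :=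
              add_le_add (abs_add_le _ _) le_rfl
          _ ≤ ε' + deltaVar X f (n + 1) + ε' := by
              have e1 : |g x - f zx| ≤ ε' := by rw [abs_sub_comm]; exact hzxq.le
              have e2 : |f zy - g y| ≤ ε' := hzyq.le
              exact add_le_add (add_le_add e1 h2) e2
          _ = deltaVar X f (n + 1) + 2 * ε' := by ring
      calc |(f x - g x) - (f y - g y)| = |(f x - f y) - (g x - g y)| := by ring_nf
        _ ≤ |f x - f y| + |g x - g y| := abs_sub _ _
        _ ≤ 2 * deltaVar X f (n + 1) + 2 * ε' := by linarith
    -- (4) head bound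
    have hhead : ∀ n : ℕ, deltaVar X (fun x => f x - g x) (n + 1) ≤ 2 * (σ + ε') := by
      intro n
      apply SVaux_deltaVar_le (by linarith : (0:ℝ) ≤ 2 * (σ + ε'))
      intro x hx y hy hxy
      calc |(f x - g x) - (f y - g y)| ≤ |f x - g x| + |f y - g y| := abs_sub _ _
        _ ≤ (σ + ε') + (σ + ε') := add_le_add (hsup x hx) (hsup y hy)
        _ = 2 * (σ + ε') := by ring
    -- (5) tail bound
    have htail : ∀ n : ℕ, M ≤ n + 1 →
        deltaVar X (fun x => f x - g x) (n + 1) ≤ deltaVar X f (n + 1) := by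
      intro n hn
      apply SVaux_deltaVar_le (SVaux_deltaVar_nonneg X f _)
      intro x hx y hy hxy
      have hgxy : g x = g y := by
        have : (fun k : {k : Fin d → ℤ // k ∈ boxF d M} => x k.1)
            = fun k => y k.1 := by
          funext k
          exact hxy k.1 (le_trans ((SVaux_mem_boxF k.1).1 k.2) hn)
        simp only [hgdef, this]
      rw [show (f x - g x) - (f y - g y) = (f x - f y) - (g x - g y) by ring,
        hgxy, sub_self, sub_zero]
      exact SVaux_abs_sub_le_deltaVar hC hx hy hxy
    -- assemble the tsum estimate
    set s : ℕ → ℝ := fun n => ((n : ℝ) + 1) ^ (d - 1) *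
      deltaVar X (fun x => f x - g x) (n + 1) with hsdef
    have hsnn : ∀ n, 0 ≤ s n := fun n =>
      mul_nonneg (by positivity) (SVaux_deltaVar_nonneg X _ _)
    have hbound : ∀ n, s n ≤ 2 * t n +
        (if n < M then ((n : ℝ) + 1) ^ (d - 1) * (2 * ε') else 0) := by
      intro n
      by_cases h : n < M
      · rw [if_pos h]
        have h2 := hmid n h
        calc s n ≤ ((n : ℝ) + 1) ^ (d - 1) * (2 * deltaVar X f (n + 1) + 2 * ε') :=
              mul_le_mul_of_nonneg_left h2 (by positivity)
          _ = 2 * t n + ((n : ℝ) + 1) ^ (d - 1) * (2 * ε') := by rw [ht]; ring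
      · rw [if_neg h]
        have h2 := htail n (by omega)
        have h3 : s n ≤ t n := mul_le_mul_of_nonneg_left h2 (by positivity)
        linarith [htnn n]
    have hib : Summable (fun n => 2 * t n +
        (if n < M then ((n : ℝ) + 1) ^ (d - 1) * (2 * ε') else 0)) := by
      refine (hsum.mul_left 2).add ?_
      apply summable_of_ne_finset_zero (s := Finset.range M)
      intro n hn
      rw [if_neg (by simpa using hn)]
    have hs : Summable s := Summable.of_nonneg_of_le hsnn hbound hib
    have hstail : ∑' i, s (i + M) ≤ ∑' k, t (k + N) := by
      have h1 : ∑' i, s (i + M) ≤ ∑' i, t (i + M) := by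
        refine Summable.tsum_le_tsum (fun i => ?_) ((summable_nat_add_iff M).2 hs)
          ((summable_nat_add_iff M).2 hsum)
        exact mul_le_mul_of_nonneg_left (htail (i + M) (by omega)) (by positivity)
      have h2 : ∑' i, t (i + M) ≤ ∑' k, t (k + N) := by
        have hsumN : Summable (fun i => t (i + N)) := (summable_nat_add_iff N).2 hsum
        have h3 := Summable.sum_add_tsum_nat_add (f := fun i => t (i + N)) (M - N) hsumN
        have heq : (fun i : ℕ => t (i + (M - N) + N)) = fun i => t (i + M) := by
          funext i; congr 1; omega
        rw [heq] at h3
        have hhd : 0 ≤ ∑ i ∈ Finset.range (M - N), t (i + N) :=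
          Finset.sum_nonneg fun i _ => htnn _
        linarith
      linarith
    have hshead : ∑ n ∈ Finset.range M, s n
        ≤ 2 * (σ + ε') * CN + 2 * (∑' k, t (k + N)) + 2 * ε' * CM := by
      have hNM : N ≤ M := by omega
      have hcons := Finset.sum_Ico_consecutive (fun n => s n) (Nat.zero_le N) hNM
      rw [Finset.range_eq_Ico, ← hcons]
      have hp1 : ∑ n ∈ Finset.Ico 0 N, s n ≤ 2 * (σ + ε') * CN := by
        have h1 : ∑ n ∈ Finset.Ico 0 N, s n
            ≤ ∑ n ∈ Finset.Ico 0 N, ((n : ℝ) + 1) ^ (d - 1) * (2 * (σ + ε')) := by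
          refine Finset.sum_le_sum fun n _ => ?_
          exact mul_le_mul_of_nonneg_left (hhead n) (by positivity)
        rw [← Finset.sum_mul] at h1
        have h2 : ∑ n ∈ Finset.Ico 0 N, ((n : ℝ) + 1) ^ (d - 1) = CN := by
          rw [hCNdef, Finset.range_eq_Ico]
        rw [h2] at h1
        linarith
      have hp2 : ∑ n ∈ Finset.Ico N M, s n
          ≤ 2 * (∑' k, t (k + N)) + 2 * ε' * CM := by
        have h1 : ∑ n ∈ Finset.Ico N M, s n
            ≤ ∑ n ∈ Finset.Ico N M, (2 * t n + ((n : ℝ) + 1) ^ (d - 1) * (2 * ε')) := by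
          refine Finset.sum_le_sum fun n hn => ?_
          have hnM : n < M := (Finset.mem_Ico.1 hn).2
          have := hbound n
          rw [if_pos hnM] at this
          exact this
        rw [Finset.sum_add_distrib] at h1
        have h2 : ∑ n ∈ Finset.Ico N M, 2 * t n ≤ 2 * ∑' k, t (k + N) := by
          rw [← Finset.mul_sum]
          have h3 : ∑ n ∈ Finset.Ico N M, t n = ∑ k ∈ Finset.range (M - N), t (k + N) := by
            rw [Finset.sum_Ico_eq_sum_range]
            exact Finset.sum_congr rfl fun k _ => by rw [Nat.add_comm]
          have h4 : ∑ k ∈ Finset.range (M - N), t (k + N) ≤ ∑' k, t (k + N) :=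
            Summable.sum_le_tsum _ (fun k _ => htnn _) ((summable_nat_add_iff N).2 hsum)
          rw [h3]
          linarith
        have h5 : ∑ n ∈ Finset.Ico N M, ((n : ℝ) + 1) ^ (d - 1) * (2 * ε')
            ≤ 2 * ε' * CM := by
          rw [← Finset.sum_mul]
          have h6 : ∑ n ∈ Finset.Ico N M, ((n : ℝ) + 1) ^ (d - 1) ≤ CM := by
            rw [hCMdef, Finset.range_eq_Ico]
            refine Finset.sum_le_sum_of_subset_of_nonneg
              (Finset.Ico_subset_Ico (Nat.zero_le N) le_rfl) fun n _ _ => by positivity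
          have hε'nn : (0:ℝ) ≤ 2 * ε' := by linarith
          nlinarith [h6, hε'nn]
        linarith
      linarith
    have htsum : ∑' n, s n ≤ 2 * (σ + ε') * CN + 2 * (∑' k, t (k + N)) + 2 * ε' * CM
        + ∑' k, t (k + N) := by
      rw [← Summable.sum_add_tsum_nat_add M hs]
      linarith
    have hsupn : supNormOn X (fun x => f x - g x) ≤ σ + ε' := by
      apply Real.sSup_le _ (by linarith)
      rintro r ⟨x, hx, rfl⟩
      exact hsup x hx
    have hσval : σ * (1 + 2 * CN) = ε / 8 := by
      have hc : (1 + 2 * CN) ≠ 0 := ne_of_gt (by linarith)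
      have h1 : σ = ε / 8 / (1 + 2 * CN) := by rw [hσdef, div_div]
      rw [h1, div_mul_cancel₀ _ hc]
    have hε'val : ε' * (1 + 2 * CN + 2 * CM) = ε / 8 := by
      have hc : (1 + 2 * CN + 2 * CM) ≠ 0 := ne_of_gt (by linarith)
      have h1 : ε' = ε / 8 / (1 + 2 * CN + 2 * CM) := by rw [hε'def, div_div]
      rw [h1, div_mul_cancel₀ _ hc]
    show supNormOn X (fun x => f x - g x) + ∑' n, s n < ε
    have hT : ∑' k, t (k + N) < ε / 8 := hN
    linarith
end

section
/- Let φ ∈ 𝓕(X). Then there exists a positive integer n such that: (a) φ(x) agrees with x on Λ_n^c for every x ∈ X, and (b) for all x, y ∈ X, x_{Λ_n} = y_{Λ_n} if and only if φ(x)_{Λ_n} = φ(y)_{Λ_n}. -/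
open MeasureTheory Filter Topology

lemma mem_boxF {d m : ℕ} {k : Fin d → ℤ} : k ∈ boxF d m ↔ normInf k ≤ m := by
  simp only [boxF, Finset.mem_Icc, Pi.le_def, normInf, Finset.sup_le_iff, Finset.mem_univ,
    forall_true_left]
  constructor
  · rintro ⟨h1, h2⟩ i; have := h1 i; have := h2 i; omega
  · intro h; exact ⟨fun i => by have := h i; omega, fun i => by have := h i; omega⟩

lemma key_uniform {d : ℕ} {A : Type*} [Fintype A] [TopologicalSpace A] [DiscreteTopology A]
    (X : Set (Config d A)) (hcl : IsClosed X)
    (Φ : ↥X → ↥X) (hΦ : Continuous Φ) (m : ℕ)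
    (ha : ∀ x : ↥X, ∀ k : Fin d → ℤ, m < normInf k → (Φ x).1 k = x.1 k) :
    ∃ N : ℕ, m ≤ N ∧ 1 ≤ N ∧ ∀ x y : ↥X, (∀ k, normInf k ≤ N → x.1 k = y.1 k) →
      ∀ k, normInf k ≤ N → (Φ x).1 k = (Φ y).1 k := by
  haveI : CompactSpace ↥X := isCompact_iff_compactSpace.mp hcl.isCompact
  have h1 : ∀ (x : ↥X) (k : Fin d → ℤ), ∃ I : Finset (Fin d → ℤ),
      ∀ y : ↥X, (∀ i ∈ I, y.1 i = x.1 i) → (Φ y).1 k = (Φ x).1 k := by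
    intro x k
    have hg : Continuous (fun y : ↥X => (Φ y).1 k) :=
      ((continuous_apply k).comp continuous_subtype_val).comp hΦ
    have hS : {y : ↥X | (Φ y).1 k = (Φ x).1 k} ∈ 𝓝 x :=
      hg.continuousAt.preimage_mem_nhds ((isOpen_discrete {(Φ x).1 k}).mem_nhds rfl)
    rw [nhds_subtype, Filter.mem_comap] at hS
    obtain ⟨s, hs, hsub⟩ := hS
    rw [nhds_pi, Filter.mem_pi] at hs
    obtain ⟨I, hIfin, t, ht, hts⟩ := hs
    refine ⟨hIfin.toFinset, fun y hy => ?_⟩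
    apply hsub
    apply hts
    rw [Set.mem_pi]
    intro i hi
    rw [hy i (hIfin.mem_toFinset.mpr hi)]
    exact mem_of_mem_nhds (ht i)
  choose Ifun hIfun using h1
  set J : ↥X → Finset (Fin d → ℤ) := fun x => (boxF d m).biUnion (Ifun x) with hJdef
  have hJ : ∀ x y : ↥X, (∀ i ∈ J x, y.1 i = x.1 i) → ∀ k ∈ boxF d m,
      (Φ y).1 k = (Φ x).1 k := by
    intro x y hy k hk
    exact hIfun x k y (fun i hi => hy i (Finset.mem_biUnion.mpr ⟨k, hk, hi⟩))
  set U : ↥X → Set ↥X := fun x => {y | ∀ i ∈ J x, y.1 i = x.1 i} with hUdef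
  have hUopen : ∀ x, IsOpen (U x) := by
    intro x
    have hU : U x = ⋂ i ∈ J x, {y : ↥X | y.1 i = x.1 i} := by
      ext y; simp [hUdef]
    rw [hU]
    refine isOpen_biInter_finset fun i _ => ?_
    have hc : Continuous fun y : ↥X => y.1 i :=
      (continuous_apply i).comp continuous_subtype_val
    exact (isOpen_discrete {x.1 i}).preimage hc
  have hcov : (Set.univ : Set ↥X) ⊆ ⋃ x : ↥X, U x :=
    fun x _ => Set.mem_iUnion.mpr ⟨x, fun i _ => rfl⟩
  obtain ⟨tf, htf⟩ := isCompact_univ.elim_finite_subcover U hUopen hcov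
  set N : ℕ := max (max m 1) (tf.sup fun x => (J x).sup normInf) with hNdef
  refine ⟨N, le_trans (le_max_left m 1) (le_max_left _ _),
    le_trans (le_max_right m 1) (le_max_left _ _), ?_⟩
  intro x y hxy k hk
  have hx := htf (Set.mem_univ x)
  simp only [Set.mem_iUnion] at hx
  obtain ⟨z, hzt, hxz⟩ := hx
  have hyz : y ∈ U z := by
    intro i hi
    have hni : normInf i ≤ N := by
      refine le_trans (le_trans (Finset.le_sup hi)
        (Finset.le_sup (f := fun x => (J x).sup normInf) hzt)) (le_max_right _ _)
    exact (hxy i hni).symm.trans (hxz i hi)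
  by_cases hkm : normInf k ≤ m
  · rw [hJ z x hxz k (mem_boxF.mpr hkm), hJ z y hyz k (mem_boxF.mpr hkm)]
  · push_neg at hkm
    rw [ha x k hkm, ha y k hkm]
    exact hxy k hk

/-- For every `φ ∈ 𝓕(X)` there is `n ≥ 1` such that (a) `φ(x)` agrees with
`x` off `Λ_n` for every `x ∈ X`, and (b) `x_{Λ_n} = y_{Λ_n}` iff `φ(x)_{Λ_n} = φ(y)_{Λ_n}`. -/
theorem memF_uniform {d : ℕ} (hd : 1 ≤ d) {A : Type*} [Fintype A] [Nonempty A]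
    [TopologicalSpace A] [DiscreteTopology A]
    (X : Set (Config d A)) (hne : X.Nonempty) (hcl : IsClosed X)
    (hinv : ∀ k : Fin d → ℤ, ∀ x ∈ X, shift k x ∈ X)
    (φ : ↥X ≃ₜ ↥X) (hφ : memF X φ) :
    ∃ n : ℕ, 1 ≤ n ∧
      (∀ x : ↥X, ∀ k : Fin d → ℤ, n < normInf k → (φ x).1 k = x.1 k) ∧
      (∀ x y : ↥X,
        ((∀ k : Fin d → ℤ, normInf k ≤ n → x.1 k = y.1 k) ↔
          (∀ k : Fin d → ℤ, normInf k ≤ n → (φ x).1 k = (φ y).1 k))) := by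
  obtain ⟨m, hm1, hma⟩ := hφ
  have hsa : ∀ x : ↥X, ∀ k : Fin d → ℤ, m < normInf k → (φ.symm x).1 k = x.1 k := by
    intro x k hk
    have h := hma (φ.symm x) k hk
    rw [Homeomorph.apply_symm_apply] at h
    exact h.symm
  obtain ⟨N₁, hN₁m, hN₁1, hN₁⟩ := key_uniform X hcl φ φ.continuous m hma
  obtain ⟨N₂, hN₂m, hN₂1, hN₂⟩ := key_uniform X hcl φ.symm φ.symm.continuous m hsa
  refine ⟨max N₁ N₂, le_trans hN₁1 (le_max_left _ _), ?_, ?_⟩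
  · intro x k hk
    exact hma x k (lt_of_le_of_lt (le_trans hN₁m (le_max_left _ _)) hk)
  · intro x y
    constructor
    · intro h k hk
      by_cases hkN : normInf k ≤ N₁
      · exact hN₁ x y (fun j hj => h j (le_trans hj (le_max_left _ _))) k hkN
      · push_neg at hkN
        rw [hma x k (lt_of_le_of_lt hN₁m hkN), hma y k (lt_of_le_of_lt hN₁m hkN)]
        exact h k hk
    · intro h k hk
      by_cases hkN : normInf k ≤ N₂
      · have := hN₂ (φ x) (φ y) (fun j hj => h j (le_trans hj (le_max_right _ _))) k hkN
        simpa using this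
      · push_neg at hkN
        have h1 := hsa (φ x) k (lt_of_le_of_lt hN₂m hkN)
        have h2 := hsa (φ y) k (lt_of_le_of_lt hN₂m hkN)
        simp only [Homeomorph.symm_apply_apply] at h1 h2
        rw [h1, h2]
        exact h k hk
end

section
/- If X is a subshift of finite type, then the Gibbs relation equals the topological Gibbs relation: 𝔗 = 𝔗⁰, i.e. for every pair x, y ∈ X agreeing outside a finite set there exists φ ∈ 𝓕(X) with y = φ(x). -/
open MeasureTheory Filter Topology

namespace GibbsAuxSFT

variable {d : ℕ} {A : Type*}

lemma mem_boxF_iff {N : ℕ} {k : Fin d → ℤ} : k ∈ boxF d N ↔ normInf k ≤ N := by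
  simp only [boxF, Finset.mem_Icc, Pi.le_def, normInf, Finset.sup_le_iff, Finset.mem_univ,
    true_implies]
  constructor
  · rintro ⟨h1, h2⟩ i
    have := h1 i; have := h2 i; omega
  · intro h
    exact ⟨fun i => by have := h i; omega, fun i => by have := h i; omega⟩

lemma normInf_add_le (a b : Fin d → ℤ) : normInf (a + b) ≤ normInf a + normInf b := by
  refine Finset.sup_le fun i _ => ?_
  calc ((a + b) i).natAbs = (a i + b i).natAbs := rfl
    _ ≤ (a i).natAbs + (b i).natAbs := Int.natAbs_add_le _ _
    _ ≤ normInf a + normInf b :=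
      add_le_add (Finset.le_sup (f := fun i => (a i).natAbs) (Finset.mem_univ i))
        (Finset.le_sup (f := fun i => (b i).natAbs) (Finset.mem_univ i))

lemma normInf_le_add (k l : Fin d → ℤ) : normInf l ≤ normInf (k + l) + normInf k := by
  have h1 : normInf (k + l + -k) ≤ normInf (k + l) + normInf (-k) := normInf_add_le _ _
  have h2 : normInf (-k) = normInf k := by
    unfold normInf; simp
  have h3 : k + l + -k = l := by abel
  rwa [h3, h2] at h1

lemma continuous_of_depends [TopologicalSpace A] [DiscreteTopology A]
    (g : Config d A → A) (S : Finset (Fin d → ℤ))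
    (h : ∀ z w, (∀ s ∈ S, z s = w s) → g z = g w) : Continuous g := by
  have hlc : IsLocallyConstant g := by
    intro s
    rw [isOpen_iff_mem_nhds]
    intro z hz
    have hU : IsOpen {w : Config d A | ∀ j ∈ S, w j = z j} := by
      have heq : {w : Config d A | ∀ j ∈ S, w j = z j}
          = ⋂ j ∈ S, {w : Config d A | w j = z j} := by
        ext w; simp
      rw [heq]
      refine isOpen_biInter_finset fun j _ => ?_
      have := (continuous_apply (A := fun _ : Fin d → ℤ => A) j).isOpen_preimage
        {z j} (isOpen_discrete _)
      exact this
    refine Filter.mem_of_superset (hU.mem_nhds (fun j _ => rfl)) ?_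
    intro w hw
    have : g w = g z := h w z (fun s hs => hw s hs)
    simpa [this] using hz
  exact hlc.continuous

open Classical in
/-- The finitary swap: exchanges configurations looking like `x` on `Λ_m` with those
looking like `y` on `Λ_m`, modifying only coordinates in `Λ_M`. -/
noncomputable def swapMap (x y : Config d A) (M m : ℕ) (z : Config d A) : Config d A :=
  fun k => if normInf k ≤ M then
      (if ∀ j, normInf j ≤ m → z j = x j then y k
       else if ∀ j, normInf j ≤ m → z j = y j then x k
       else z k)
    else z k

section swap

variable {x y : Config d A} {M m : ℕ}

lemma swapMap_far {z : Config d A} {k : Fin d → ℤ} (hk : M < normInf k) :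
    swapMap x y M m z k = z k := by
  simp only [swapMap]
  rw [if_neg (not_le.mpr hk)]

lemma swapMap_eqOn_of_P (hxy : ∀ k, M < normInf k → x k = y k)
    {z : Config d A} (hP : ∀ j, normInf j ≤ m → z j = x j) :
    ∀ j, normInf j ≤ m → swapMap x y M m z j = y j := by
  intro j hj
  by_cases h : normInf j ≤ M
  · simp only [swapMap]
    rw [if_pos h, if_pos hP]
  · rw [swapMap_far (not_le.mp h), hP j hj]
    exact hxy j (not_le.mp h)

lemma swapMap_eqOn_of_Q (hxy : ∀ k, M < normInf k → x k = y k)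
    {z : Config d A} (hP : ¬ ∀ j, normInf j ≤ m → z j = x j)
    (hQ : ∀ j, normInf j ≤ m → z j = y j) :
    ∀ j, normInf j ≤ m → swapMap x y M m z j = x j := by
  intro j hj
  by_cases h : normInf j ≤ M
  · simp only [swapMap]
    rw [if_pos h, if_neg hP, if_pos hQ]
  · rw [swapMap_far (not_le.mp h), hQ j hj]
    exact (hxy j (not_le.mp h)).symm

lemma swapMap_of_none {z : Config d A} (hP : ¬ ∀ j, normInf j ≤ m → z j = x j)
    (hQ : ¬ ∀ j, normInf j ≤ m → z j = y j) :
    swapMap x y M m z = z := by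
  funext k
  simp only [swapMap]
  by_cases h : normInf k ≤ M
  · rw [if_pos h, if_neg hP, if_neg hQ]
  · rw [if_neg h]

lemma swapMap_invol (hxy : ∀ k, M < normInf k → x k = y k) (hMm : M ≤ m)
    (z : Config d A) : swapMap x y M m (swapMap x y M m z) = z := by
  by_cases hP : ∀ j, normInf j ≤ m → z j = x j
  · set w := swapMap x y M m z with hw
    have hwQ : ∀ j, normInf j ≤ m → w j = y j := swapMap_eqOn_of_P hxy hP
    by_cases hwP : ∀ j, normInf j ≤ m → w j = x j
    · have hxy' : ∀ j, normInf j ≤ m → x j = y j := fun j hj => by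
        rw [← hwP j hj, hwQ j hj]
      funext k
      by_cases hk : normInf k ≤ M
      · show swapMap x y M m w k = z k
        simp only [swapMap]
        rw [if_pos hk, if_pos hwP, ← hxy' k (le_trans hk hMm)]
        exact (hP k (le_trans hk hMm)).symm
      · rw [swapMap_far (not_le.mp hk), hw, swapMap_far (not_le.mp hk)]
    · funext k
      by_cases hk : normInf k ≤ M
      · show swapMap x y M m w k = z k
        simp only [swapMap]
        rw [if_pos hk, if_neg hwP, if_pos hwQ]
        exact (hP k (le_trans hk hMm)).symm
      · rw [swapMap_far (not_le.mp hk), hw, swapMap_far (not_le.mp hk)]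
  · by_cases hQ : ∀ j, normInf j ≤ m → z j = y j
    · set w := swapMap x y M m z with hw
      have hwP : ∀ j, normInf j ≤ m → w j = x j := swapMap_eqOn_of_Q hxy hP hQ
      funext k
      by_cases hk : normInf k ≤ M
      · show swapMap x y M m w k = z k
        simp only [swapMap]
        rw [if_pos hk, if_pos hwP]
        exact (hQ k (le_trans hk hMm)).symm
      · rw [swapMap_far (not_le.mp hk), hw, swapMap_far (not_le.mp hk)]
    · rw [swapMap_of_none hP hQ, swapMap_of_none hP hQ]

lemma swapMap_continuous [TopologicalSpace A] [DiscreteTopology A]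
    (x y : Config d A) (M m : ℕ) : Continuous (swapMap x y M m) := by
  refine continuous_pi fun k => continuous_of_depends _ (insert k (boxF d m)) ?_
  intro z w hzw
  have hk : z k = w k := hzw k (Finset.mem_insert_self _ _)
  have hbox : ∀ j, normInf j ≤ m → z j = w j := fun j hj =>
    hzw j (Finset.mem_insert_of_mem (mem_boxF_iff.mpr hj))
  have hP : (∀ j, normInf j ≤ m → z j = x j) ↔ (∀ j, normInf j ≤ m → w j = x j) := by
    constructor <;> intro h j hj
    · rw [← hbox j hj]; exact h j hj
    · rw [hbox j hj]; exact h j hj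
  have hQ : (∀ j, normInf j ≤ m → z j = y j) ↔ (∀ j, normInf j ≤ m → w j = y j) := by
    constructor <;> intro h j hj
    · rw [← hbox j hj]; exact h j hj
    · rw [hbox j hj]; exact h j hj
  simp only [swapMap]
  by_cases h1 : normInf k ≤ M
  · rw [if_pos h1, if_pos h1]
    by_cases h2 : ∀ j, normInf j ≤ m → z j = x j
    · rw [if_pos h2, if_pos (hP.mp h2)]
    · rw [if_neg h2, if_neg (fun h => h2 (hP.mpr h))]
      by_cases h3 : ∀ j, normInf j ≤ m → z j = y j
      · rw [if_pos h3, if_pos (hQ.mp h3)]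
      · rw [if_neg h3, if_neg (fun h => h3 (hQ.mpr h))]
        exact hk
  · rw [if_neg h1, if_neg h1]
    exact hk

end swap

lemma mem_of_patch {X : Set (Config d A)} {n : ℕ}
    {F : Set ({k : Fin d → ℤ // normInf k ≤ n} → A)}
    (hXF : X = {x : Config d A |
      ∀ l : Fin d → ℤ, (fun k : {k : Fin d → ℤ // normInf k ≤ n} => shift l x k.1) ∉ F})
    {M m : ℕ} (hmn : M + 2 * n ≤ m)
    {u z w : Config d A} (hu : u ∈ X) (hz : z ∈ X)
    (h1 : ∀ j, normInf j ≤ m → w j = u j)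
    (h2 : ∀ j, M < normInf j → w j = z j) : w ∈ X := by
  rw [hXF]
  intro l
  by_cases hl : normInf l ≤ M + n
  · have heq : (fun k : {k : Fin d → ℤ // normInf k ≤ n} => shift l w k.1)
        = (fun k : {k : Fin d → ℤ // normInf k ≤ n} => shift l u k.1) := by
      funext k
      show w (k.1 + l) = u (k.1 + l)
      refine h1 _ ?_
      have h4 := normInf_add_le k.1 l
      have h5 := k.2
      omega
    rw [heq]
    rw [hXF] at hu
    exact hu l
  · have heq : (fun k : {k : Fin d → ℤ // normInf k ≤ n} => shift l w k.1)
        = (fun k : {k : Fin d → ℤ // normInf k ≤ n} => shift l z k.1) := by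
      funext k
      show w (k.1 + l) = z (k.1 + l)
      refine h2 _ ?_
      have h4 := normInf_le_add k.1 l
      have h5 := k.2
      omega
    rw [heq]
    rw [hXF] at hz
    exact hz l

/-- Restricting an involutive continuous self-map of the full shift to an invariant
subshift gives a homeomorphism. -/
def restrictHomeo [TopologicalSpace A] (X : Set (Config d A))
    (f : Config d A → Config d A) (hinv : ∀ z, f (f z) = z)
    (hmem : ∀ z ∈ X, f z ∈ X) (hcont : Continuous f) : ↥X ≃ₜ ↥X where
  toFun z := ⟨f z.1, hmem z.1 z.2⟩
  invFun z := ⟨f z.1, hmem z.1 z.2⟩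
  left_inv z := Subtype.ext (hinv z.1)
  right_inv z := Subtype.ext (hinv z.1)
  continuous_toFun := Continuous.subtype_mk (hcont.comp continuous_subtype_val) _
  continuous_invFun := Continuous.subtype_mk (hcont.comp continuous_subtype_val) _

end GibbsAuxSFT

/-- If `X` is a subshift of finite type, then the Gibbs relation equals
the topological Gibbs relation: `𝔗 = 𝔗⁰`. -/
theorem gibbsRel_eq_topGibbsRel_of_SFT {d : ℕ} (hd : 1 ≤ d) {A : Type*} [Fintype A]
    [Nonempty A] [TopologicalSpace A] [DiscreteTopology A]
    (X : Set (Config d A)) (hne : X.Nonempty) (hSFT : IsSFT X) :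
    gibbsRel X = topGibbsRel X := by
  classical
  obtain ⟨n, hn1, F, hXF⟩ := hSFT
  ext p
  constructor
  · rintro ⟨hx, hy, Λ, hΛ⟩
    set M := Λ.sup normInf with hM
    set m := M + 2 * n with hm
    have hxy : ∀ k, M < normInf k → p.1 k = p.2 k := by
      intro k hk
      refine hΛ k fun hkΛ => ?_
      exact absurd (Finset.le_sup (f := normInf) hkΛ) (not_le.mpr hk)
    have hMm : M ≤ m := by omega
    have hmem : ∀ z ∈ X, GibbsAuxSFT.swapMap p.1 p.2 M m z ∈ X := by
      intro z hz
      by_cases hP : ∀ j, normInf j ≤ m → z j = p.1 j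
      · exact GibbsAuxSFT.mem_of_patch hXF le_rfl hy hz
          (GibbsAuxSFT.swapMap_eqOn_of_P hxy hP)
          (fun j hj => GibbsAuxSFT.swapMap_far hj)
      · by_cases hQ : ∀ j, normInf j ≤ m → z j = p.2 j
        · exact GibbsAuxSFT.mem_of_patch hXF le_rfl hx hz
            (GibbsAuxSFT.swapMap_eqOn_of_Q hxy hP hQ)
            (fun j hj => GibbsAuxSFT.swapMap_far hj)
        · rw [GibbsAuxSFT.swapMap_of_none hP hQ]
          exact hz
    refine ⟨hx, GibbsAuxSFT.restrictHomeo X (GibbsAuxSFT.swapMap p.1 p.2 M m)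
      (GibbsAuxSFT.swapMap_invol hxy hMm) hmem
      (GibbsAuxSFT.swapMap_continuous p.1 p.2 M m), ⟨m + 1, by omega, ?_⟩, ?_⟩
    · intro z k hk
      exact GibbsAuxSFT.swapMap_far (by omega)
    · show GibbsAuxSFT.swapMap p.1 p.2 M m p.1 = p.2
      funext k
      by_cases hk : normInf k ≤ M
      · simp only [GibbsAuxSFT.swapMap]
        rw [if_pos (show ∀ j : Fin d → ℤ, normInf j ≤ m → True from fun j _ => trivial),
          if_pos hk]
      · rw [GibbsAuxSFT.swapMap_far (not_le.mp hk)]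
        exact hxy k (not_le.mp hk)
  · rintro ⟨hx, φ, ⟨N, hN1, hφ⟩, hφx⟩
    refine ⟨hx, ?_, boxF d N, ?_⟩
    · rw [← hφx]
      exact (φ ⟨p.1, hx⟩).2
    · intro k hk
      rw [← hφx]
      exact (hφ ⟨p.1, hx⟩ k (not_le.mp fun h => hk (GibbsAuxSFT.mem_boxF_iff.mpr h))).symm
end
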